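/- Assume a ≠ 0, b² − a c > 0, ω_p ≥ 0, and that reals T, Φ satisfy the dispersion relation a T² + 2 b T Φ + c Φ² + ω_p² = 0 with Φ ≠ 0. Set p_t = a T + b Φ, p_φ = b T + c Φ, and ε = 1 if Φ > 0, ε = −1 if Φ < 0. Then p_t² + ω_p² a > 0 and p_φ = (b/a) p_t − ε (1/a) √(b² − a c) √(p_t² + ω_p² a). -/

import Mathlib

open Real

/-- At a point of circular tangency, the angular momentum `p_φ` of a light ray in a
plasma is determined by `p_t` via the potential formula, with the sign given by the
sign of `Φ = φ̇`. -/
theorem stmt0 (a b c ωp T Φ : ℝ)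
    (ha : a ≠ 0) (hdet : 0 < b ^ 2 - a * c) (hωp : 0 ≤ ωp)
    (hdisp : a * T ^ 2 + 2 * b * T * Φ + c * Φ ^ 2 + ωp ^ 2 = 0)
    (hΦ : Φ ≠ 0)
    (pt pφ ε : ℝ)
    (hpt : pt = a * T + b * Φ) (hpφ : pφ = b * T + c * Φ)
    (hε : ε = if 0 < Φ then 1 else -1) :
    0 < pt ^ 2 + ωp ^ 2 * a ∧
      pφ = (b / a) * pt -
        ε * (1 / a) * Real.sqrt (b ^ 2 - a * c) * Real.sqrt (pt ^ 2 + ωp ^ 2 * a) := by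
  have key : pt ^ 2 + ωp ^ 2 * a = (b ^ 2 - a * c) * Φ ^ 2 := by
    subst hpt; linear_combination a * hdisp
  have hΦ2 : 0 < Φ ^ 2 := by positivity
  have hpos : 0 < pt ^ 2 + ωp ^ 2 * a := by rw [key]; positivity
  refine ⟨hpos, ?_⟩
  have hsq : Real.sqrt (pt ^ 2 + ωp ^ 2 * a) = Real.sqrt (b ^ 2 - a * c) * |Φ| := by
    rw [key, Real.sqrt_mul hdet.le, Real.sqrt_sq_eq_abs]
  rw [hsq]
  have hεΦ : ε * |Φ| = Φ := by
    rcases lt_or_gt_of_ne hΦ with h | h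
    · simp [hε, not_lt.mpr h.le, abs_of_neg h]
    · simp [hε, h, abs_of_pos h]
  have hD : Real.sqrt (b ^ 2 - a * c) * Real.sqrt (b ^ 2 - a * c) = b ^ 2 - a * c :=
    Real.mul_self_sqrt hdet.le
  have h2 : ε * Real.sqrt (b ^ 2 - a * c) * (Real.sqrt (b ^ 2 - a * c) * |Φ|)
      = (b ^ 2 - a * c) * Φ := by
    calc ε * Real.sqrt (b ^ 2 - a * c) * (Real.sqrt (b ^ 2 - a * c) * |Φ|)
        = (Real.sqrt (b ^ 2 - a * c) * Real.sqrt (b ^ 2 - a * c)) * (ε * |Φ|) := by ring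
      _ = (b ^ 2 - a * c) * Φ := by rw [hD, hεΦ]
  subst hpt hpφ
  field_simp
  rw [mul_comm c a]
  linear_combination h2
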